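/- arXiv:1306.1043 — 3 statements merged into one kernel-verified Lean document; each statement's English description precedes it below -/
import Mathlib

section
/- For two DAGs G and H, SID(G,H) = 0 if and only if G is a subgraph of H (i.e., every edge of G is an edge of H). -/
/-- A partially directed graph over `Fin p` is an edge relation `E ⊆ V²`.
The Structural Hamming Distance counts unordered pairs `{i,j}` of distinct
vertices whose edge type (none, `i→j`, `j→i`, undirected) differs. -/
noncomputable def shd {p : ℕ} (G H : Fin p → Fin p → Prop) : ℕ :=
  {q : Fin p × Fin p | q.1 < q.2 ∧
    ¬ ((G q.1 q.2 ↔ H q.1 q.2) ∧ (G q.2 q.1 ↔ H q.2 q.1))}.ncard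

/-- A directed graph is acyclic if no vertex lies on a directed cycle. -/
def Acyclic {V : Type*} (E : V → V → Prop) : Prop :=
  ∀ i, ¬ Relation.TransGen E i i

/-- Two vertices are adjacent if there is an edge in either direction. -/
def Adjacent {V : Type*} (E : V → V → Prop) (a b : V) : Prop := E a b ∨ E b a

/-- A path from `X` to `Y`: a list of at least two distinct vertices,
consecutive ones adjacent, starting at `X` and ending at `Y`. -/
def IsPath {V : Type*} (E : V → V → Prop) (X Y : V) (l : List V) : Prop :=
  l.Nodup ∧ l.Chain' (Adjacent E) ∧ l.head? = some X ∧ l.getLast? = some Y ∧ 2 ≤ l.length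

/-- A path `l` is blocked by `S` if some interior node `b` (with path-neighbours
`a` and `c`) satisfies: either `b ∈ S` and `b` is a non-collider on the path, or
`b` is a collider on the path and neither `b` nor any of its descendants is in `S`. -/
def BlockedPath {V : Type*} (E : V → V → Prop) (S : Set V) (l : List V) : Prop :=
  ∃ (l₁ : List V) (a b c : V) (l₂ : List V), l = l₁ ++ a :: b :: c :: l₂ ∧
    ((b ∈ S ∧ ¬ (E a b ∧ E c b)) ∨
     ((E a b ∧ E c b) ∧ b ∉ S ∧ ∀ d, Relation.TransGen E b d → d ∉ S))

/-- The parent set of a vertex. -/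
def parents {V : Type*} (E : V → V → Prop) (i : V) : Set V := {j | E j i}

/-- Criterion (*): no element of `Z` is a descendant of any `W` lying on a
directed path from `X` to `Y`, and `Z` blocks all non-directed paths from `X` to `Y`. -/
def ValidAdjustment {V : Type*} (E : V → V → Prop) (Z : Set V) (X Y : V) : Prop :=
  (∀ z ∈ Z, ∀ W, Relation.TransGen E X W → Relation.ReflTransGen E W Y →
      ¬ Relation.ReflTransGen E W z) ∧
  (∀ l, IsPath E X Y l → ¬ l.Chain' E → BlockedPath E Z l)

/-- Structural Intervention Distance: the number of ordered pairs `(i,j)`, `i ≠ j`,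
such that either `j` is a parent of `i` in `H` and a descendant of `i` in `G`, or
`j` is not a parent of `i` in `H` and `Pa_H(i)` fails criterion (*) for `(G,i,j)`. -/
noncomputable def sid {p : ℕ} (G H : Fin p → Fin p → Prop) : ℕ :=
  {q : Fin p × Fin p | q.1 ≠ q.2 ∧
    ((q.2 ∈ parents H q.1 ∧ Relation.TransGen G q.1 q.2) ∨
     (q.2 ∉ parents H q.1 ∧ ¬ ValidAdjustment G (parents H q.1) q.1 q.2))}.ncard

/-- If a path starts with a directed edge but is not fully directed, it contains a collider
reachable from its start. -/
lemma find_break {V : Type*} (G : V → V → Prop) :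
    ∀ (t : List V) (a b : V), G a b → (a :: b :: t).Chain' (Adjacent G) →
      ¬ (a :: b :: t).Chain' G →
      ∃ (l₁ : List V) (x y z : V) (l₂ : List V), a :: b :: t = l₁ ++ x :: y :: z :: l₂ ∧
        G x y ∧ G z y ∧ Relation.TransGen G a y := by
  intro t
  induction t with
  | nil =>
    intro a b hab _ hnc
    exact absurd (by simp [List.Chain', List.isChain_cons_cons, hab]) hnc
  | cons c t' ih =>
    intro a b hab hadj hnc
    rw [List.Chain', List.isChain_cons_cons] at hadj
    by_cases hbc : G b c
    · by_cases h2 : (b :: c :: t').Chain' G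
      · exact absurd (List.isChain_cons_cons.mpr ⟨hab, h2⟩) hnc
      · obtain ⟨l₁, x, y, z, l₂, heq, hxy, hzy, hby⟩ := ih b c hbc hadj.2 h2
        exact ⟨a :: l₁, x, y, z, l₂, by rw [List.cons_append, heq],
          hxy, hzy, (Relation.TransGen.single hab).trans hby⟩
    · have hcb : G c b := (List.isChain_cons_cons.mp hadj.2).1.resolve_left hbc
      exact ⟨[], a, b, c, t', rfl, hab, hcb, Relation.TransGen.single hab⟩

/-- The key blocking lemma: a set of non-descendants of `X` containing all parents
of `X` and not containing `Y` blocks every non-directed path from `X` to `Y`. -/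
lemma blocked_of_good_set {V : Type*} (G : V → V → Prop) (hG : Acyclic G)
    (S : Set V) (X Y : V)
    (hP1 : ∀ z ∈ S, ¬ Relation.TransGen G X z)
    (hP2 : ∀ v, G v X → v ∈ S) (hY : Y ∉ S) :
    ∀ l, IsPath G X Y l → ¬ l.Chain' G → BlockedPath G S l := by
  intro l hpath hnc
  obtain ⟨hnd, hadj, hhead, hlast, hlen⟩ := hpath
  -- decompose l = X :: v :: t
  obtain ⟨t0, rfl⟩ : ∃ t0, l = X :: t0 := by
    cases l with
    | nil => simp at hlen
    | cons h0 t0 =>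
      have h0X : h0 = X := by simpa using hhead
      exact ⟨t0, by rw [h0X]⟩
  obtain ⟨v, t, rfl⟩ : ∃ v t, t0 = v :: t := by
    cases t0 with
    | nil => simp at hlen
    | cons v t => exact ⟨v, t, rfl⟩
  by_cases hXv : G X v
  · -- directed start: find the first break, a collider reachable from X
    obtain ⟨l₁, x, y, z, l₂, heq, hxy, hzy, hXy⟩ := find_break G t X v hXv hadj hnc
    refine ⟨l₁, x, y, z, l₂, heq, Or.inr ⟨⟨hxy, hzy⟩, fun hyS => hP1 y hyS hXy, fun d hyd hdS => hP1 d hdS (hXy.trans hyd)⟩⟩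
  · -- backdoor start: v is a parent of X, hence in S; it is a non-collider
    have hvX : G v X := ((List.isChain_cons_cons.mp hadj).1).resolve_left hXv
    have hvS : v ∈ S := hP2 v hvX
    cases t with
    | nil =>
      have : v = Y := by simpa using hlast
      exact absurd (this ▸ hvS) hY
    | cons c t' =>
      exact ⟨[], X, v, c, t', rfl, Or.inl ⟨hvS, fun h => hXv h.1⟩⟩

/-- For two DAGs G and H, SID(G,H) = 0 iff G is a subgraph of H. -/
theorem sid_eq_zero_iff_subgraph {p : ℕ} (G H : Fin p → Fin p → Prop)
    (hG : Acyclic G) (hH : Acyclic H) :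
    sid G H = 0 ↔ ∀ a b, G a b → H a b := by
  have hmono : ∀ a b, (∀ x y, G x y → H x y) → Relation.TransGen G a b →
      Relation.TransGen H a b := fun a b hs h => Relation.TransGen.mono hs a b h
  rw [sid, Set.ncard_eq_zero (Set.toFinite _), Set.eq_empty_iff_forall_notMem]
  constructor
  · intro hempty a b hGab
    by_contra hHab
    have hne : a ≠ b := by
      rintro rfl; exact hG a (Relation.TransGen.single hGab)
    by_cases hHba : H b a
    · exact hempty (a, b) ⟨hne, Or.inl ⟨hHba, Relation.TransGen.single hGab⟩⟩
    · refine hempty (b, a) ⟨hne.symm, Or.inr ⟨hHab, fun hVA => ?_⟩⟩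
      have hpath : IsPath G b a [b, a] := by
        refine ⟨by simp [hne.symm], ?_, rfl, rfl, le_refl 2⟩
        simp [List.Chain', List.isChain_cons_cons, Adjacent, hGab]
      have hnc : ¬ ([b, a] : List (Fin p)).Chain' G := by
        simp only [List.Chain', List.isChain_cons_cons, List.isChain_singleton, and_true]
        intro hGba
        exact hG a ((Relation.TransGen.single hGab).trans (Relation.TransGen.single hGba))
      obtain ⟨l₁, x, y, z, l₂, heq, _⟩ := hVA.2 [b, a] hpath hnc
      have := congrArg List.length heq
      simp [List.length_append] at this
      omega
  · rintro hsub ⟨i, j⟩ ⟨hne, hcase | hcase⟩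
    · obtain ⟨hji, hij⟩ := hcase
      exact hH i ((hmono i j hsub hij).trans (Relation.TransGen.single hji))
    · obtain ⟨hjnP, hnVA⟩ := hcase
      apply hnVA
      constructor
      · intro z hz W hiW hWj hWz
        have : Relation.TransGen G i z := hiW.trans_left hWz
        exact hH i ((hmono i z hsub this).trans (Relation.TransGen.single hz))
      · refine blocked_of_good_set G hG (parents H i) i j (fun z hz hiz => ?_)
          (fun v hv => hsub v i hv) hjnP
        exact hH i ((hmono i z hsub hiz).trans (Relation.TransGen.single hz))
end

section
/- If SHD(G,H) = 1 for two DAGs G, H on p vertices, then SID(G,H) ≤ 2(p-1), and this bound is sharp: for every p ≥ 3 there exist DAGs G, H on p vertices with SHD(G,H) = 1 and SID(G,H) = 2(p-1). -/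
lemma chain'_break {V : Type*} {G : V → V → Prop} :
    ∀ (l : List V) (x y : V), G x y → List.Chain' (Adjacent G) (x :: y :: l) →
      ¬ List.Chain' G (x :: y :: l) →
      ∃ l₁ a b c l₂, x :: y :: l = l₁ ++ a :: b :: c :: l₂ ∧ G a b ∧ G c b ∧
        Relation.TransGen G x b := by
  intro l
  induction l with
  | nil => intro x y hxy _ hnc; exact absurd (List.isChain_pair.mpr hxy) hnc
  | cons z l ih =>
    intro x y hxy hadj hnc
    by_cases hyz : G y z
    · have hadj' : List.Chain' (Adjacent G) (y :: z :: l) := (List.isChain_cons_cons.mp hadj).2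
      have hnc' : ¬ List.Chain' G (y :: z :: l) := fun h => hnc (List.isChain_cons_cons.mpr ⟨hxy, h⟩)
      obtain ⟨l₁, a, b, c, l₂, heq, hab, hcb, htg⟩ := ih y z hyz hadj' hnc'
      exact ⟨x :: l₁, a, b, c, l₂, by rw [List.cons_append, ← heq], hab, hcb,
        Relation.TransGen.head hxy htg⟩
    · have hzy : G z y := ((List.isChain_cons_cons.mp (List.isChain_cons_cons.mp hadj).2).1).resolve_left hyz
      exact ⟨[], x, y, z, l, rfl, hxy, hzy, Relation.TransGen.single hxy⟩

lemma valid_parent {V : Type*} {G : V → V → Prop} (hG : Acyclic G) {i j : V}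
    (hj : j ∉ parents G i) : ValidAdjustment G (parents G i) i j := by
  constructor
  · intro z hz W hXW hWY hWz
    exact hG i (((hXW.trans_left hWz)).tail hz)
  · intro l hl hnc
    obtain ⟨hnodup, hadj, hhead, hlast, hlen⟩ := hl
    obtain ⟨x, t, rfl⟩ : ∃ x t, l = x :: t := by
      cases l with
      | nil => simp at hlen
      | cons x t => exact ⟨x, t, rfl⟩
    obtain rfl : i = x := by simpa using hhead.symm
    obtain (rfl | ⟨y, rfl⟩ | ⟨y, z, t', rfl⟩) : t = [] ∨ (∃ y, t = [y]) ∨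
        ∃ y z t', t = y :: z :: t' := by
      match t with
      | [] => exact Or.inl rfl
      | [y] => exact Or.inr (Or.inl ⟨y, rfl⟩)
      | y :: z :: t' => exact Or.inr (Or.inr ⟨y, z, t', rfl⟩)
    · simp at hlen
    · 
      obtain rfl : j = y := by simpa using hlast.symm
      have hor : G i j ∨ G j i := (List.isChain_pair (R := Adjacent G)).mp hadj
      have hnij : ¬ G i j := fun h => hnc (List.isChain_pair.mpr h)
      exact absurd (hor.resolve_left hnij) hj
    · by_cases hyi : G y i
      · refine ⟨[], i, y, z, t', rfl, Or.inl ⟨hyi, ?_⟩⟩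
        rintro ⟨hiy, -⟩
        exact hG i (Relation.TransGen.head hiy (Relation.TransGen.single hyi))
      · have hiy : G i y := ((List.isChain_cons_cons.mp hadj).1).resolve_right hyi
        obtain ⟨l₁, a, b, c, l₂, heq, hab, hcb, htg⟩ :=
          chain'_break (z :: t') i y hiy hadj hnc
        refine ⟨l₁, a, b, c, l₂, heq, Or.inr ⟨⟨hab, hcb⟩, ?_, ?_⟩⟩
        · intro hb; exact hG i (htg.tail hb)
        · intro d hbd hd; exact hG i ((htg.trans hbd).tail hd)

lemma parent_adjust {V : Type*} {G : V → V → Prop} (hG : Acyclic G) (i j : V) :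
    ¬ ((j ∈ parents G i ∧ Relation.TransGen G i j) ∨
       (j ∉ parents G i ∧ ¬ ValidAdjustment G (parents G i) i j)) := by
  rintro (⟨hj, htg⟩ | ⟨hj, hva⟩)
  · exact hG i (htg.tail hj)
  · exact hva (valid_parent hG hj)

lemma acyclic_of_rank {V : Type*} {E : V → V → Prop} (f : V → ℕ)
    (h : ∀ i j, E i j → f i < f j) : Acyclic E := by
  intro i hi
  have : Relation.TransGen (fun a b => f a < f b) i i := Relation.TransGen.mono h i i hi
  haveI hT : IsTrans V (fun a b : V => f a < f b) := ⟨fun _ _ _ h1 h2 => lt_trans h1 h2⟩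
  exact lt_irrefl _ ((Relation.transGen_eq_self (r := fun a b : V => f a < f b)) ▸ this)

lemma ncard_two_rows {p : ℕ} (a b : Fin p) (hab : a ≠ b) :
    ({q : Fin p × Fin p | (q.1 = a ∨ q.1 = b) ∧ q.1 ≠ q.2}).ncard = (p - 1) + (p - 1) := by
  have hcompl : ∀ c : Fin p, (({c}ᶜ : Set (Fin p))).ncard = p - 1 := by
    intro c
    have h := Set.ncard_add_ncard_compl ({c} : Set (Fin p))
    rw [Set.ncard_singleton] at h
    simp [Nat.card_eq_fintype_card] at h
    omega
  have hinj : ∀ c : Fin p, Function.Injective (Prod.mk c : Fin p → Fin p × Fin p) :=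
    fun c x y h => congrArg Prod.snd h
  have heq : ({q : Fin p × Fin p | (q.1 = a ∨ q.1 = b) ∧ q.1 ≠ q.2})
      = (Prod.mk a '' ({a}ᶜ)) ∪ (Prod.mk b '' ({b}ᶜ)) := by
    ext ⟨x, y⟩
    simp only [Set.mem_setOf_eq, Set.mem_union, Set.mem_image, Set.mem_compl_iff,
      Set.mem_singleton_iff, Prod.mk.injEq]
    constructor
    · rintro ⟨h1 | h1, h2⟩
      · exact Or.inl ⟨y, by subst h1; tauto, by omega, rfl⟩
      · exact Or.inr ⟨y, by subst h1; tauto, by omega, rfl⟩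
    · rintro (⟨z, hz, rfl, rfl⟩ | ⟨z, hz, rfl, rfl⟩) <;> simp_all <;> tauto
  rw [heq, Set.ncard_union_eq, Set.ncard_image_of_injective _ (hinj a),
    Set.ncard_image_of_injective _ (hinj b), hcompl, hcompl]
  rw [Set.disjoint_left]
  rintro q ⟨z, -, rfl⟩ ⟨w, -, hw⟩
  exact hab (congrArg Prod.fst hw).symm

@[reducible] def Gex {V : Type*} (a b : V) : V → V → Prop :=
  fun i j => (i = a ∧ j ≠ a) ∨ (i = b ∧ j ≠ a ∧ j ≠ b)

@[reducible] def Hex {V : Type*} (a b : V) : V → V → Prop :=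
  fun i j => (i = a ∧ j ≠ a ∧ j ≠ b) ∨ (i = b ∧ j ≠ b)

/-- If SHD(G,H) = 1 for DAGs on p vertices then SID(G,H) ≤ 2(p-1); this bound
is sharp: for every p ≥ 3 it is attained by some pair of DAGs. -/
theorem sid_le_of_shd_eq_one_and_sharp :
    (∀ (p : ℕ) (G H : Fin p → Fin p → Prop), Acyclic G → Acyclic H →
      shd G H = 1 → sid G H ≤ 2 * (p - 1)) ∧
    (∀ p : ℕ, 3 ≤ p → ∃ G H : Fin p → Fin p → Prop, Acyclic G ∧ Acyclic H ∧
      shd G H = 1 ∧ sid G H = 2 * (p - 1)) := by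
  constructor
  · -- Part 1: the bound
    intro p G H hG hH h1
    unfold shd at h1
    obtain ⟨q0, hSd⟩ := Set.ncard_eq_one.mp h1
    set a := q0.1 with ha
    set b := q0.2 with hb
    have hq0 : q0 ∈ {q : Fin p × Fin p | q.1 < q.2 ∧
        ¬ ((G q.1 q.2 ↔ H q.1 q.2) ∧ (G q.2 q.1 ↔ H q.2 q.1))} := by
      rw [hSd]; exact rfl
    have hab : a < b := hq0.1
    have hagree : ∀ u v : Fin p, u < v → (u, v) ≠ q0 →
        ((G u v ↔ H u v) ∧ (G v u ↔ H v u)) := by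
      intro u v huv hne
      by_contra hc
      have hmem : (u, v) ∈ {q : Fin p × Fin p | q.1 < q.2 ∧
          ¬ ((G q.1 q.2 ↔ H q.1 q.2) ∧ (G q.2 q.1 ↔ H q.2 q.1))} := ⟨huv, hc⟩
      rw [hSd] at hmem
      exact hne hmem
    have key : ∀ i : Fin p, i ≠ a → i ≠ b → parents H i = parents G i := by
      intro i hia hib
      ext j
      simp only [parents, Set.mem_setOf_eq]
      rcases lt_trichotomy j i with hlt | heq | hlt
      · have hne : (j, i) ≠ q0 := by
          intro h; exact hib (by rw [hb, ← h])
        exact ((hagree j i hlt hne).1).symm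
      · subst heq
        constructor
        · intro h; exact absurd (Relation.TransGen.single h) (hH _)
        · intro h; exact absurd (Relation.TransGen.single h) (hG _)
      · have hne : (i, j) ≠ q0 := by
          intro h; exact hia (by rw [ha, ← h])
        exact ((hagree i j hlt hne).2).symm
    have hsub : {q : Fin p × Fin p | q.1 ≠ q.2 ∧
        ((q.2 ∈ parents H q.1 ∧ Relation.TransGen G q.1 q.2) ∨
         (q.2 ∉ parents H q.1 ∧ ¬ ValidAdjustment G (parents H q.1) q.1 q.2))} ⊆
        {q : Fin p × Fin p | (q.1 = a ∨ q.1 = b) ∧ q.1 ≠ q.2} := by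
      rintro q ⟨hne, hcond⟩
      refine ⟨?_, hne⟩
      by_contra hc
      push_neg at hc
      rw [key q.1 hc.1 hc.2] at hcond
      exact parent_adjust hG q.1 q.2 hcond
    unfold sid
    calc {q : Fin p × Fin p | q.1 ≠ q.2 ∧
        ((q.2 ∈ parents H q.1 ∧ Relation.TransGen G q.1 q.2) ∨
         (q.2 ∉ parents H q.1 ∧ ¬ ValidAdjustment G (parents H q.1) q.1 q.2))}.ncard
        ≤ ({q : Fin p × Fin p | (q.1 = a ∨ q.1 = b) ∧ q.1 ≠ q.2}).ncard :=
          Set.ncard_le_ncard hsub (Set.toFinite _)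
      _ = (p - 1) + (p - 1) := ncard_two_rows a b (ne_of_lt hab)
      _ ≤ 2 * (p - 1) := by omega
  · -- Part 2: sharpness
    intro p hp
    have ha0 : (0 : ℕ) < p := by omega
    have hb0 : (1 : ℕ) < p := by omega
    set a : Fin p := ⟨0, ha0⟩ with ha
    set b : Fin p := ⟨1, hb0⟩ with hb
    have hab : a ≠ b := by simp [ha, hb, Fin.ext_iff]
    have haltb : a < b := by simp [ha, hb, Fin.lt_def]
    have hG0acy : Acyclic (Gex a b) := by
      apply acyclic_of_rank Fin.val
      rintro i j (⟨rfl, h1⟩ | ⟨rfl, h1, h2⟩)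
      · have hj : j.val ≠ 0 := fun h => h1 (Fin.ext h)
        show (0 : ℕ) < j.val
        omega
      · have hj1 : j.val ≠ 0 := fun h => h1 (Fin.ext h)
        have hj2 : j.val ≠ 1 := fun h => h2 (Fin.ext h)
        show (1 : ℕ) < j.val
        omega
    have hH0acy : Acyclic (Hex a b) := by
      apply acyclic_of_rank (fun x => if x = b then 0 else x.val + 1)
      rintro i j (⟨rfl, h1, h2⟩ | ⟨rfl, h1⟩)
      · have hj1 : j.val ≠ 0 := fun h => h1 (Fin.ext h)
        rw [if_neg hab, if_neg h2]
        show (0 : ℕ) + 1 < j.val + 1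
        omega
      · rw [if_pos rfl, if_neg h1]
        omega
    have hG0ab : Gex a b a b := Or.inl ⟨rfl, hab.symm⟩
    have hH0ab : ¬ Hex a b a b := by
      rintro (⟨-, -, h⟩ | ⟨h, -⟩)
      · exact h rfl
      · exact hab h
    have hagree : ∀ u v : Fin p, ¬(u = a ∧ v = b) → ¬(u = b ∧ v = a) →
        (Gex a b u v ↔ Hex a b u v) := by
      intro u v h1 h2
      simp only [Gex, Hex]
      constructor <;> rintro (⟨rfl, h⟩ | ⟨rfl, h⟩) <;> tauto
    refine ⟨Gex a b, Hex a b, hG0acy, hH0acy, ?_, ?_⟩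
    · -- shd = 1
      have hset : {q : Fin p × Fin p | q.1 < q.2 ∧
          ¬ ((Gex a b q.1 q.2 ↔ Hex a b q.1 q.2) ∧
             (Gex a b q.2 q.1 ↔ Hex a b q.2 q.1))} = {(a, b)} := by
        ext ⟨u, v⟩
        simp only [Set.mem_setOf_eq, Set.mem_singleton_iff, Prod.mk.injEq]
        constructor
        · rintro ⟨hlt, hdis⟩
          by_contra hc
          push_neg at hc
          apply hdis
          have hva : v ≠ a := by
            intro h
            rw [h] at hlt
            rw [Fin.lt_def] at hlt
            simp [ha] at hlt
          have hua : ¬ (u = b ∧ v = a) := fun h => hva h.2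
          have huab : ¬ (u = a ∧ v = b) := fun h => (hc h.1) h.2
          have hvb : ¬ (v = b ∧ u = a) := fun h => (hc h.2) h.1
          have hvu : ¬ (v = a ∧ u = b) := fun h => hva h.1
          exact ⟨hagree u v huab hua, hagree v u hvu hvb⟩
        · rintro ⟨rfl, rfl⟩
          exact ⟨haltb, fun h => hH0ab (h.1.mp hG0ab)⟩
      unfold shd
      rw [hset]
      exact Set.ncard_singleton _
    · -- sid = 2 * (p - 1)
      have hPa : parents (Hex a b) a = {b} := by
        ext z
        simp only [parents, Hex, Set.mem_setOf_eq, Set.mem_singleton_iff]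
        constructor
        · rintro (⟨-, h, -⟩ | ⟨h, -⟩)
          · exact absurd rfl h
          · exact h
        · rintro rfl; exact Or.inr ⟨rfl, hab⟩
      have hPb : parents (Hex a b) b = ∅ := by
        ext z
        simp only [parents, Hex, Set.mem_setOf_eq, Set.mem_empty_iff_false, iff_false]
        rintro (⟨-, -, h⟩ | ⟨-, h⟩) <;> exact h rfl
      have hnG0ba : ¬ Gex a b b a := by
        rintro (⟨h, -⟩ | ⟨-, h, -⟩)
        · exact hab h.symm
        · exact h rfl
      have hset : {q : Fin p × Fin p | q.1 ≠ q.2 ∧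
          ((q.2 ∈ parents (Hex a b) q.1 ∧ Relation.TransGen (Gex a b) q.1 q.2) ∨
           (q.2 ∉ parents (Hex a b) q.1 ∧
             ¬ ValidAdjustment (Gex a b) (parents (Hex a b) q.1) q.1 q.2))} =
          {q : Fin p × Fin p | (q.1 = a ∨ q.1 = b) ∧ q.1 ≠ q.2} := by
        ext ⟨u, v⟩
        simp only [Set.mem_setOf_eq]
        constructor
        · rintro ⟨hne, hcond⟩
          refine ⟨?_, hne⟩
          by_contra hc
          push_neg at hc
          have hpar : parents (Hex a b) u = parents (Gex a b) u := by
            ext z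
            simp only [parents, Gex, Hex, Set.mem_setOf_eq]
            constructor
            · rintro (⟨rfl, h1, h2⟩ | ⟨rfl, h1⟩)
              · exact Or.inl ⟨rfl, h1⟩
              · exact Or.inr ⟨rfl, hc.1, h1⟩
            · rintro (⟨rfl, h1⟩ | ⟨rfl, h1, h2⟩)
              · exact Or.inl ⟨rfl, h1, hc.2⟩
              · exact Or.inr ⟨rfl, h2⟩
          rw [hpar] at hcond
          exact parent_adjust hG0acy u v hcond
        · rintro ⟨hu | hu, hne⟩ <;> subst hu
          · -- u = a
            refine ⟨hne, ?_⟩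
            by_cases hvb : v = b
            · subst hvb
              exact Or.inl ⟨by rw [hPa]; rfl, Relation.TransGen.single hG0ab⟩
            · refine Or.inr ⟨by rw [hPa]; exact hvb, fun hva => ?_⟩
              have hG0bv : Gex a b b v := Or.inr ⟨rfl, fun h => hne h.symm, hvb⟩
              exact hva.1 b (by rw [hPa]; rfl) b (Relation.TransGen.single hG0ab)
                (Relation.ReflTransGen.single hG0bv) Relation.ReflTransGen.refl
          · -- u = b
            refine ⟨hne, Or.inr ⟨by rw [hPb]; exact Set.notMem_empty v,
              fun hva => ?_⟩⟩
            by_cases hv : v = a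
            · subst hv
              have hpath : IsPath (Gex a b) b a [b, a] := by
                refine ⟨by simp [hab.symm], ?_, by simp, by simp, by simp⟩
                exact List.isChain_pair.mpr (Or.inr hG0ab)
              have hnc : ¬ List.Chain' (Gex a b) [b, a] :=
                fun h => hnG0ba ((List.isChain_pair (R := Gex a b)).mp h)
              obtain ⟨l₁, a', b', c', l₂, heq, -⟩ := hva.2 [b, a] hpath hnc
              have hlen := congrArg List.length heq
              simp [List.length_append] at hlen
              omega
            · have hG0av : Gex a b a v := Or.inl ⟨rfl, hv⟩
              have hav : a ≠ v := fun h => hv h.symm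
              have hpath : IsPath (Gex a b) b v [b, a, v] := by
                refine ⟨by simp [hab.symm, hne, hav], ?_, by simp, by simp, by simp⟩
                exact List.isChain_cons_cons.mpr ⟨Or.inr hG0ab,
                  List.isChain_pair.mpr (Or.inl hG0av)⟩
              have hnc : ¬ List.Chain' (Gex a b) [b, a, v] := by
                intro h
                exact hnG0ba (List.isChain_cons_cons.mp h).1
              obtain ⟨l₁, a', b', c', l₂, heq, hdisj⟩ := hva.2 [b, a, v] hpath hnc
              rcases l₁ with _ | ⟨w, l₁⟩
              · simp only [List.nil_append, List.cons.injEq] at heq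
                obtain ⟨rfl, rfl, rfl, rfl⟩ := heq
                rcases hdisj with ⟨h, -⟩ | ⟨⟨h, -⟩, -⟩
                · rw [hPb] at h; exact h
                · exact hnG0ba h
              · have hlen := congrArg List.length heq
                simp [List.length_append] at hlen
                omega
      unfold sid
      rw [hset, ncard_two_rows a b hab]
      omega
end

section
/- There exist DAGs G and H on p vertices with SID(G,H) = 0 and SHD(G,H) = p(p-1)/2 (the maximal value); hence SHD cannot be bounded by any function of SID. Concretely, take G the empty DAG and H any fully connected DAG. -/
lemma count_lt (p : ℕ) :
    (Finset.univ.filter fun q : Fin p × Fin p => q.1 < q.2).card = p * (p - 1) / 2 := by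
  rw [Finset.card_eq_sum_card_fiberwise (f := Prod.snd) (t := Finset.univ) (fun x _ => Finset.mem_univ _)]
  have h : ∀ j : Fin p,
      ((Finset.univ.filter fun q : Fin p × Fin p => q.1 < q.2).filter fun q => q.2 = j).card
        = (j : ℕ) := by
    intro j
    rw [← Fin.card_Iio (b := j)]
    apply Finset.card_bij (fun q _ => q.1)
    · intro q hq; simp at hq ⊢; omega
    · intro a ha b hb hab
      simp at ha hb
      ext
      · exact congrArg Fin.val hab
      · simp [ha.2, hb.2]
    · intro b hb; exact ⟨(b, j), by simpa using Finset.mem_Iio.mp hb, rfl⟩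
  simp_rw [h]
  rw [Fin.sum_univ_eq_sum_range (fun i => i), Finset.sum_range_id]

lemma transGen_lt {α : Type*} [Preorder α] {a b : α}
    (h : Relation.TransGen (fun i j : α => i < j) a b) : a < b := by
  induction h with
  | single h => exact h
  | tail _ h ih => exact ih.trans h

lemma transGen_false {V : Type*} {a b : V} (h : Relation.TransGen (fun _ _ : V => False) a b) : False := by
  induction h with
  | single h => exact h
  | tail _ h _ => exact h

/-- There exist DAGs G and H on p vertices with SID(G,H) = 0 and SHD(G,H)
maximal, equal to p(p-1)/2: take G the empty DAG and H a fully connected DAG.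
Hence SHD cannot be bounded by any function of SID. -/
theorem sid_zero_shd_maximal (p : ℕ) :
    ∃ G H : Fin p → Fin p → Prop, Acyclic G ∧ Acyclic H ∧
      sid G H = 0 ∧ shd G H = p * (p - 1) / 2 := by
  refine ⟨fun _ _ => False, fun i j => i < j, ?_, ?_, ?_, ?_⟩
  · intro i h; exact transGen_false h
  · intro i h
    exact lt_irrefl i (transGen_lt h)
  · have he : {q : Fin p × Fin p | q.1 ≠ q.2 ∧
        ((q.2 ∈ parents (fun i j : Fin p => i < j) q.1 ∧
            Relation.TransGen (fun _ _ : Fin p => False) q.1 q.2) ∨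
         (q.2 ∉ parents (fun i j : Fin p => i < j) q.1 ∧
            ¬ ValidAdjustment (fun _ _ : Fin p => False)
              (parents (fun i j : Fin p => i < j) q.1) q.1 q.2))} = ∅ := by
      ext q
      simp only [Set.mem_setOf_eq, Set.mem_empty_iff_false, iff_false, not_and, not_or]
      intro _
      constructor
      · intro _ h; exact transGen_false h
      · intro _ h
        refine h ⟨fun z _ W hW _ _ => transGen_false hW, fun l hl _ => ?_⟩
        obtain ⟨-, hc, -, -, hlen⟩ := hl
        exfalso
        match l, hlen with
        | a :: b :: t, _ =>
          rcases (List.isChain_cons_cons.mp hc).1 with h | h <;> exact h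
    rw [sid, he, Set.ncard_empty]
  · rw [shd]
    have : {q : Fin p × Fin p | q.1 < q.2 ∧
        ¬ ((False ↔ q.1 < q.2) ∧ (False ↔ q.2 < q.1))} =
        ↑(Finset.univ.filter fun q : Fin p × Fin p => q.1 < q.2) := by
      ext q
      simp only [Set.mem_setOf_eq, Finset.coe_filter, Finset.mem_univ, true_and]
      constructor
      · exact fun h => h.1
      · intro h; exact ⟨h, fun hc => (hc.1.mpr h)⟩
    rw [this, Set.ncard_coe_finset, count_lt]
end
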